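/- Let w be a Hardy weight on Y ⊆ X and g ∈ F(Y) strictly positive. Suppose φ ∈ C_c(Y) satisfies the weak eikonal inequality (1/2)∑_{x,y∈X} b(x,y) φ(x) φ(y) (g^{1/2}(x)−g^{1/2}(y))² ≤ γ ∑_X g w φ² for some 0 < γ < 1. Then (∑_{x ∈ supp φ} (g/w)(x)(Δφ(x))²)^{1/2} ≥ (1−γ)(∑_X g w φ²)^{1/2}. -/

import Mathlib

open Real Classical

theorem stmt3
    (X : Type*) [Countable X]
    (b : X → X → ℝ)
    (hsymm : ∀ x y, b x y = b y x)
    (hdiag : ∀ x, b x x = 0)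
    (hnonneg : ∀ x y, 0 ≤ b x y)
    (hloc : ∀ x, Summable (fun y => b x y))
    (Y : Set X)
    (w : X → ℝ) (hw : ∀ x ∈ Y, 0 < w x)
    (hHardy : ∀ ψ : X → ℝ, (Function.support ψ).Finite →
      Function.support ψ ⊆ Y →
      (∑' x, (1 / 2) * ∑' y, b x y * (ψ x - ψ y) ^ 2)
        ≥ ∑' x, if x ∈ Y then w x * ψ x ^ 2 else 0)
    (g : X → ℝ) (hg : ∀ x ∈ Y, 0 < g x)
    (hgF : ∀ x ∈ Y, Summable (fun y => b x y * |g y|))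
    (γ : ℝ) (hγ0 : 0 < γ) (hγ1 : γ < 1)
    (φ : X → ℝ) (hφ : (Function.support φ).Finite)
    (hφY : Function.support φ ⊆ Y)
    (hweak : (1 / 2) * (∑' x, ∑' y,
        b x y * φ x * φ y * (Real.sqrt (g x) - Real.sqrt (g y)) ^ 2)
      ≤ γ * ∑' x, g x * w x * φ x ^ 2) :
    Real.sqrt (∑' x, if φ x = 0 then 0 else
        (g x / w x) * (∑' y, b x y * (φ x - φ y)) ^ 2)
      ≥ (1 - γ) * Real.sqrt (∑' x, g x * w x * φ x ^ 2) := by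
  classical
  set S : Finset X := hφ.toFinset with hSdef
  have hmemS : ∀ x, x ∈ S ↔ φ x ≠ 0 := by
    intro x; simp [hSdef, Function.mem_support]
  have hφ0 : ∀ x ∉ S, φ x = 0 := by
    intro x hx; by_contra h; exact hx ((hmemS x).2 h)
  have hSY : ∀ x ∈ S, x ∈ Y := fun x hx => hφY ((hmemS x).1 hx)
  have hg' : ∀ x ∈ S, 0 < g x := fun x hx => hg x (hSY x hx)
  have hw' : ∀ x ∈ S, 0 < w x := fun x hx => hw x (hSY x hx)
  set ψ : X → ℝ := fun x => Real.sqrt (g x) * φ x with hψdef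
  have hψ0 : ∀ x ∉ S, ψ x = 0 := fun x hx => by simp [hψdef, hφ0 x hx]
  -- summability of b x · times anything finitely supported, etc.
  have hbsymm : ∀ y, Summable (fun x => b x y) :=
    fun y => (hloc y).congr (fun x => hsymm y x)
  have hfinsum : ∀ (f : X → ℝ), (∀ x ∉ S, f x = 0) → Summable f :=
    fun f hf => summable_of_ne_finset_zero hf
  -- Δφ
  set Δ : X → ℝ := fun x => ∑' y, b x y * (φ x - φ y) with hΔdef
  -- key summabilities for fixed x
  have sΔ : ∀ x, Summable (fun y => b x y * (φ x - φ y)) := by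
    intro x
    have h1 : Summable (fun y => b x y * φ x) := (hloc x).mul_right _
    have h2 : Summable (fun y => b x y * φ y) :=
      hfinsum _ (fun y hy => by simp [hφ0 y hy])
    exact (h1.sub h2).congr (fun y => by ring)
  -- A, B, T, D
  set A : X → ℝ := fun x => ∑' y, (b x y * (ψ x * ψ x) - b x y * (ψ x * ψ y)) with hAdef
  set B : X → ℝ := fun x => ∑ y ∈ S, b x y * (ψ y * (ψ y - ψ x)) with hBdef
  set t : X → X → ℝ := fun x y =>
    b x y * (φ x * (φ y * (Real.sqrt (g x) * (Real.sqrt (g x) - Real.sqrt (g y))))) with htdef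
  set T : X → ℝ := fun x => ∑ y ∈ S, t x y with hTdef
  set D : X → ℝ := fun x => g x * φ x * Δ x with hDdef
  have sA1 : ∀ x, Summable (fun y => b x y * (ψ x * ψ x)) := fun x => (hloc x).mul_right _
  have sA2 : ∀ x, Summable (fun y => b x y * (ψ x * ψ y)) :=
    fun x => hfinsum _ (fun y hy => by simp [hψ0 y hy])
  have sA : ∀ x, Summable (fun y => b x y * (ψ x * ψ x) - b x y * (ψ x * ψ y)) :=
    fun x => (sA1 x).sub (sA2 x)
  have sBy : ∀ y, Summable (fun x => b x y * (ψ y * (ψ y - ψ x))) := by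
    intro y
    have h1 : Summable (fun x => b x y * (ψ y * ψ y)) := (hbsymm y).mul_right _
    have h2 : Summable (fun x => b x y * (ψ y * ψ x)) :=
      hfinsum _ (fun x hx => by simp [hψ0 x hx])
    exact (h1.sub h2).congr (fun x => by ring)
  have hA0 : ∀ x ∉ S, A x = 0 := by
    intro x hx
    have : ∀ y, b x y * (ψ x * ψ x) - b x y * (ψ x * ψ y) = 0 := by
      intro y; simp [hψ0 x hx]
    simp [hAdef, this]
  have hSummA : Summable A := hfinsum A hA0
  have hSummB : Summable B :=
    summable_sum (fun y (_ : y ∈ S) => sBy y)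
  -- Step 1: Hardy applied to ψ
  have hψfin : (Function.support ψ).Finite := by
    apply hφ.subset
    intro x hx
    simp only [Function.mem_support, hψdef] at hx ⊢
    intro h; exact hx (by simp [h])
  have hψY : Function.support ψ ⊆ Y := fun x hx => by
    by_contra h
    have : x ∉ S := fun hxS => h (hSY x hxS)
    exact hx (hψ0 x this)
  have hHard := hHardy ψ hψfin hψY
  set S₀ : ℝ := ∑' x, g x * w x * φ x ^ 2 with hS₀def
  have hRHS : (∑' x, if x ∈ Y then w x * ψ x ^ 2 else 0) = S₀ := by
    apply tsum_congr
    intro x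
    by_cases hxY : x ∈ Y
    · have hgx := (hg x hxY).le
      simp only [hxY, if_true, hψdef]
      rw [mul_pow, Real.sq_sqrt hgx]; ring
    · have hφx : φ x = 0 := by
        by_contra h; exact hxY (hφY h)
      simp [hxY, hφx]
  -- Step 2: Hardy LHS = ∑' A
  have hBeq : ∀ x, (∑' y, b x y * (ψ x - ψ y) ^ 2) = A x + B x := by
    intro x
    have hpt : ∀ y, b x y * (ψ x - ψ y) ^ 2 =
        (b x y * (ψ x * ψ x) - b x y * (ψ x * ψ y)) + b x y * (ψ y * (ψ y - ψ x)) := by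
      intro y; ring
    have hsB : Summable (fun y => b x y * (ψ y * (ψ y - ψ x))) :=
      hfinsum _ (fun y hy => by simp [hψ0 y hy])
    calc (∑' y, b x y * (ψ x - ψ y) ^ 2)
        = ∑' y, ((b x y * (ψ x * ψ x) - b x y * (ψ x * ψ y))
            + b x y * (ψ y * (ψ y - ψ x))) := tsum_congr hpt
      _ = A x + ∑' y, b x y * (ψ y * (ψ y - ψ x)) := Summable.tsum_add (sA x) hsB
      _ = A x + B x := by
          rw [hBdef]
          congr 1
          exact tsum_eq_sum (fun y hy => by simp [hψ0 y hy])
  have hLHS : (∑' x, (1 / 2) * ∑' y, b x y * (ψ x - ψ y) ^ 2)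
      = (1/2) * (∑' x, A x + ∑' x, B x) := by
    calc (∑' x, (1 / 2) * ∑' y, b x y * (ψ x - ψ y) ^ 2)
        = ∑' x, (1/2 : ℝ) * (A x + B x) := tsum_congr (fun x => by rw [hBeq x])
      _ = (1/2) * ∑' x, (A x + B x) := tsum_mul_left
      _ = (1/2) * (∑' x, A x + ∑' x, B x) := by rw [Summable.tsum_add hSummA hSummB]
  -- ∑' B = ∑' A
  have hBA : (∑' x, B x) = ∑' x, A x := by
    have h1 : (∑' x, B x) = ∑ y ∈ S, ∑' x, b x y * (ψ y * (ψ y - ψ x)) := by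
      rw [hBdef]
      exact Summable.tsum_finsetSum (fun y _ => sBy y)
    have h2 : ∀ y ∈ S, (∑' x, b x y * (ψ y * (ψ y - ψ x))) = A y := by
      intro y _
      apply tsum_congr
      intro x
      rw [hsymm x y]; ring
    rw [h1, Finset.sum_congr rfl h2]
    exact (tsum_eq_sum (fun x hx => hA0 x hx)).symm
  -- Step 3: A = D + T pointwise
  have hADT : ∀ x, A x = D x + T x := by
    intro x
    by_cases hx : x ∈ S
    · have hgx : Real.sqrt (g x) * Real.sqrt (g x) = g x :=
        Real.mul_self_sqrt (hg' x hx).le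
      have hpt : ∀ y, b x y * (ψ x * ψ x) - b x y * (ψ x * ψ y)
          = (g x * φ x) * (b x y * (φ x - φ y)) + t x y := by
        intro y
        simp only [hψdef, htdef]
        linear_combination (b x y * (φ x * φ x) - b x y * (φ x * φ y)) * hgx
      have hs1 : Summable (fun y => (g x * φ x) * (b x y * (φ x - φ y))) :=
        (sΔ x).mul_left _
      have hs2 : Summable (fun y => t x y) :=
        hfinsum _ (fun y hy => by simp [htdef, hφ0 y hy])
      calc A x = ∑' y, ((g x * φ x) * (b x y * (φ x - φ y)) + t x y) :=
            tsum_congr hpt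
        _ = (∑' y, (g x * φ x) * (b x y * (φ x - φ y))) + ∑' y, t x y :=
            Summable.tsum_add hs1 hs2
        _ = D x + T x := by
            have e2 : (∑' y, t x y) = T x :=
              tsum_eq_sum (fun y hy => by simp [htdef, hφ0 y hy])
            have e1 : (∑' y, (g x * φ x) * (b x y * (φ x - φ y))) = D x := by
              rw [tsum_mul_left]
            rw [e1, e2]
    · have hφx : φ x = 0 := hφ0 x hx
      have : T x = 0 := by
        rw [hTdef]
        exact Finset.sum_eq_zero (fun y _ => by simp [htdef, hφx])
      simp [hA0 x hx, this, hDdef, hφx]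
  have hT0 : ∀ x ∉ S, T x = 0 := by
    intro x hx
    exact Finset.sum_eq_zero (fun y _ => by simp [htdef, hφ0 x hx])
  have hD0' : ∀ x ∉ S, D x = 0 := fun x hx => by simp [hDdef, hφ0 x hx]
  have hSummD : Summable D := hfinsum D hD0'
  have hSummT : Summable T := hfinsum T hT0
  have hAsplit : (∑' x, A x) = (∑' x, D x) + ∑' x, T x := by
    rw [← Summable.tsum_add hSummD hSummT]
    exact tsum_congr hADT
  -- Step 4: ∑ T = (1/2) * eikonal sum
  have hTsum : (∑' x, T x) = ∑ x ∈ S, T x := tsum_eq_sum (fun x hx => hT0 x hx)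
  have hEik : (∑' x, ∑' y, b x y * φ x * φ y *
      (Real.sqrt (g x) - Real.sqrt (g y)) ^ 2)
      = ∑ x ∈ S, ∑ y ∈ S, b x y * φ x * φ y *
        (Real.sqrt (g x) - Real.sqrt (g y)) ^ 2 := by
    have hin : ∀ x, (∑' y, b x y * φ x * φ y * (Real.sqrt (g x) - Real.sqrt (g y)) ^ 2)
        = ∑ y ∈ S, b x y * φ x * φ y * (Real.sqrt (g x) - Real.sqrt (g y)) ^ 2 :=
      fun x => tsum_eq_sum (fun y hy => by simp [hφ0 y hy])
    rw [tsum_congr hin]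
    exact tsum_eq_sum (fun x hx => Finset.sum_eq_zero (fun y _ => by simp [hφ0 x hx]))
  have hTE : 2 * (∑' x, T x) = ∑' x, ∑' y, b x y * φ x * φ y *
      (Real.sqrt (g x) - Real.sqrt (g y)) ^ 2 := by
    rw [hTsum, hEik]
    have hswap : ∑ x ∈ S, T x = ∑ x ∈ S, ∑ y ∈ S, t y x := by
      rw [hTdef]; exact Finset.sum_comm
    calc 2 * ∑ x ∈ S, T x
        = ∑ x ∈ S, T x + ∑ x ∈ S, ∑ y ∈ S, t y x := by rw [← hswap]; ring
      _ = ∑ x ∈ S, ∑ y ∈ S, (t x y + t y x) := by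
          rw [hTdef, ← Finset.sum_add_distrib]
          exact Finset.sum_congr rfl (fun x _ => by rw [← Finset.sum_add_distrib])
      _ = ∑ x ∈ S, ∑ y ∈ S, b x y * φ x * φ y *
            (Real.sqrt (g x) - Real.sqrt (g y)) ^ 2 := by
          apply Finset.sum_congr rfl; intro x _
          apply Finset.sum_congr rfl; intro y _
          simp only [htdef]
          rw [hsymm y x]; ring
  have hTγ : (∑' x, T x) ≤ γ * S₀ := by
    have := hweak
    rw [← hTE] at this
    linarith
  -- Step 5: (1-γ) S₀ ≤ ∑ D
  have hDge : (1 - γ) * S₀ ≤ ∑' x, D x := by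
    have h1 : S₀ ≤ (∑' x, D x) + ∑' x, T x := by
      have h2 := hHard
      rw [hRHS, hLHS, hBA] at h2
      linarith [hAsplit]
    linarith
  -- Step 6: Cauchy-Schwarz
  set A₀ : ℝ := ∑ x ∈ S, (g x / w x) * Δ x ^ 2 with hA₀def
  have hS₀fin : S₀ = ∑ x ∈ S, g x * w x * φ x ^ 2 :=
    tsum_eq_sum (fun x hx => by simp [hφ0 x hx])
  have hS₀nonneg : 0 ≤ S₀ := by
    rw [hS₀fin]
    apply Finset.sum_nonneg
    intro x hx
    have := (hg' x hx).le
    have := (hw' x hx).le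
    positivity
  have hA₀nonneg : 0 ≤ A₀ := by
    apply Finset.sum_nonneg
    intro x hx
    have h1 := (hg' x hx).le
    have h2 := (hw' x hx).le
    positivity
  have hDfin : (∑' x, D x) = ∑ x ∈ S, D x := tsum_eq_sum (fun x hx => hD0' x hx)
  have hCS : (∑ x ∈ S, D x) ^ 2 ≤ A₀ * S₀ := by
    have hpt : ∀ x ∈ S, D x =
        (Real.sqrt (g x / w x) * Δ x) * (Real.sqrt (g x * w x) * φ x) := by
      intro x hx
      have hgx := hg' x hx
      have hwx := hw' x hx
      have : Real.sqrt (g x / w x) * Real.sqrt (g x * w x) = g x := by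
        rw [← Real.sqrt_mul (by positivity)]
        have : g x / w x * (g x * w x) = g x ^ 2 := by
          field_simp
        rw [this, Real.sqrt_sq hgx.le]
      show g x * φ x * Δ x = _
      linear_combination (-(Δ x * φ x)) * this
    rw [Finset.sum_congr rfl hpt]
    have := Finset.sum_mul_sq_le_sq_mul_sq S
      (fun x => Real.sqrt (g x / w x) * Δ x) (fun x => Real.sqrt (g x * w x) * φ x)
    have e1 : ∑ x ∈ S, (Real.sqrt (g x / w x) * Δ x) ^ 2 = A₀ := by
      apply Finset.sum_congr rfl
      intro x hx
      have hgx := hg' x hx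
      have hwx := hw' x hx
      rw [mul_pow, Real.sq_sqrt (by positivity)]
    have e2 : ∑ x ∈ S, (Real.sqrt (g x * w x) * φ x) ^ 2 = ∑ x ∈ S, g x * w x * φ x ^ 2 := by
      apply Finset.sum_congr rfl
      intro x hx
      have hgx := hg' x hx
      have hwx := hw' x hx
      rw [mul_pow, Real.sq_sqrt (by positivity)]
    rw [e1, e2, ← hS₀fin] at this
    exact this
  -- identify the LHS tsum
  have hLgoal : (∑' x, if φ x = 0 then 0 else (g x / w x) * (∑' y, b x y * (φ x - φ y)) ^ 2)
      = A₀ := by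
    rw [hA₀def]
    have : ∀ x ∈ S, (if φ x = 0 then (0:ℝ) else
        (g x / w x) * (∑' y, b x y * (φ x - φ y)) ^ 2) = (g x / w x) * Δ x ^ 2 := by
      intro x hx
      rw [if_neg ((hmemS x).1 hx), hΔdef]
    rw [tsum_eq_sum (s := S) (fun x hx => by simp [hφ0 x hx])]
    exact Finset.sum_congr rfl this
  rw [hLgoal]
  -- final arithmetic
  have hDnn : 0 ≤ ∑' x, D x := le_trans (by nlinarith) hDge
  have key : (1 - γ) * S₀ ≤ Real.sqrt A₀ * Real.sqrt S₀ := by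
    calc (1 - γ) * S₀ ≤ ∑' x, D x := hDge
      _ = Real.sqrt ((∑' x, D x) ^ 2) := (Real.sqrt_sq hDnn).symm
      _ ≤ Real.sqrt (A₀ * S₀) := Real.sqrt_le_sqrt (by rw [hDfin]; exact hCS)
      _ = Real.sqrt A₀ * Real.sqrt S₀ := Real.sqrt_mul hA₀nonneg _
  rcases eq_or_lt_of_le hS₀nonneg with h0 | h0
  · rw [← h0, Real.sqrt_zero, mul_zero]
    exact Real.sqrt_nonneg _
  · have hsq : Real.sqrt S₀ > 0 := Real.sqrt_pos.2 h0
    have hSS : Real.sqrt S₀ * Real.sqrt S₀ = S₀ := Real.mul_self_sqrt hS₀nonneg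
    rw [ge_iff_le, ← mul_le_mul_iff_left₀ hsq]
    calc (1 - γ) * Real.sqrt S₀ * Real.sqrt S₀ = (1 - γ) * S₀ := by rw [mul_assoc, hSS]
      _ ≤ Real.sqrt A₀ * Real.sqrt S₀ := key
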